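/- Let A := ψ⁺(ψ⁺)ᴴ − ψ⁻(ψ⁻)ᴴ, a Hermitian 4×4 matrix. Then the minimum of ⟨x⊗y, A(x⊗y)⟩ over all unit vectors x, y ∈ ℂ² equals −1/2 and the maximum equals +1/2; i.e., a*(A_ψ) = −1/2 and b*(A_ψ) = +1/2, so A is an ambidextrous entanglement witness. -/

import Mathlib

open Matrix

noncomputable section

/-- `x` is a unit vector in `ℂ^d`. -/
def isUnitVec {d : ℕ} (x : Fin d → ℂ) : Prop := ∑ i, ‖x i‖ ^ 2 = 1

/-- The product vector `x ⊗ y` in `ℂ² ⊗ ℂ²`. -/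
def prodVec (x y : Fin 2 → ℂ) : Fin 2 × Fin 2 → ℂ := fun ij => x ij.1 * y ij.2

/-- The Bell state `ψ⁺ = (e₀⊗e₀ + e₁⊗e₁)/√2`. -/
def bellPsiP : Fin 2 × Fin 2 → ℂ := fun ij =>
  if ij.1 = ij.2 then (((Real.sqrt 2)⁻¹ : ℝ) : ℂ) else 0

/-- The Bell state `ψ⁻ = (e₀⊗e₀ − e₁⊗e₁)/√2`. -/
def bellPsiM : Fin 2 × Fin 2 → ℂ := fun ij =>
  if ij = (0, 0) then (((Real.sqrt 2)⁻¹ : ℝ) : ℂ)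
  else if ij = (1, 1) then -(((Real.sqrt 2)⁻¹ : ℝ) : ℂ)
  else 0

/-- The observable `A_ψ = ψ⁺(ψ⁺)ᴴ − ψ⁻(ψ⁻)ᴴ`. -/
def bellA : Matrix (Fin 2 × Fin 2) (Fin 2 × Fin 2) ℂ :=
  Matrix.vecMulVec bellPsiP (star bellPsiP) - Matrix.vecMulVec bellPsiM (star bellPsiM)

lemma bellA_key (x y : Fin 2 → ℂ) :
    (star (prodVec x y) ⬝ᵥ bellA.mulVec (prodVec x y)) =
      starRingEnd ℂ (x 0 * y 0) * (x 1 * y 1) + starRingEnd ℂ (x 1 * y 1) * (x 0 * y 0) := by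
  have h2 : ((Real.sqrt 2 : ℝ) : ℂ)⁻¹ * ((Real.sqrt 2 : ℝ) : ℂ)⁻¹ = 2⁻¹ := by
    rw [← mul_inv]
    norm_num [← Complex.ofReal_mul, Real.mul_self_sqrt]
  simp only [bellA, bellPsiP, bellPsiM, dotProduct, mulVec, vecMulVec, prodVec,
    Fintype.sum_prod_type, Fin.sum_univ_two, Matrix.sub_apply, of_apply, Pi.star_apply,
    Complex.star_def, _root_.map_mul, map_inv₀, Complex.conj_ofReal]
  norm_num
  ring_nf
  rw [sq, h2]
  ring

lemma bellA_re (x y : Fin 2 → ℂ) :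
    (star (prodVec x y) ⬝ᵥ bellA.mulVec (prodVec x y)).re =
      2 * (starRingEnd ℂ (x 0 * y 0) * (x 1 * y 1)).re := by
  rw [bellA_key]
  rw [Complex.add_re]
  have : starRingEnd ℂ (x 1 * y 1) * (x 0 * y 0) =
      starRingEnd ℂ (starRingEnd ℂ (x 0 * y 0) * (x 1 * y 1)) := by
    simp [mul_comm]
  rw [this, Complex.conj_re]
  ring

lemma bellA_bound (x y : Fin 2 → ℂ) (hx : isUnitVec x) (hy : isUnitVec y) :
    |(star (prodVec x y) ⬝ᵥ bellA.mulVec (prodVec x y)).re| ≤ 1 / 2 := by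
  rw [bellA_re]
  simp only [isUnitVec, Fin.sum_univ_two] at hx hy
  have hre : |(starRingEnd ℂ (x 0 * y 0) * (x 1 * y 1)).re| ≤
      ‖x 0‖ * ‖y 0‖ * (‖x 1‖ * ‖y 1‖) := by
    calc |(starRingEnd ℂ (x 0 * y 0) * (x 1 * y 1)).re| ≤
        ‖starRingEnd ℂ (x 0 * y 0) * (x 1 * y 1)‖ := Complex.abs_re_le_norm _
      _ = ‖x 0‖ * ‖y 0‖ * (‖x 1‖ * ‖y 1‖) := by simp
  have a0 := norm_nonneg (x 0); have a1 := norm_nonneg (x 1)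
  have b0 := norm_nonneg (y 0); have b1 := norm_nonneg (y 1)
  rw [abs_le] at hre ⊢
  constructor <;>
    nlinarith [sq_nonneg (‖x 0‖ - ‖x 1‖), sq_nonneg (‖y 0‖ - ‖y 1‖),
      sq_nonneg (‖x 0‖ * ‖x 1‖ - ‖y 0‖ * ‖y 1‖), mul_nonneg (mul_nonneg a0 a1) (mul_nonneg b0 b1),
      sq_nonneg (‖x 0‖ + ‖x 1‖), sq_nonneg (‖y 0‖ + ‖y 1‖)]

/-- The minimum of `⟨x⊗y, A_ψ (x⊗y)⟩` over unit vectors `x, y ∈ ℂ²` is `−1/2` and the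
maximum is `+1/2`: `a*(A_ψ) = −1/2` and `b*(A_ψ) = 1/2`, so `A_ψ` is an ambidextrous
entanglement witness. -/
theorem bellA_min_max :
    IsLeast {r : ℝ | ∃ x y : Fin 2 → ℂ, isUnitVec x ∧ isUnitVec y ∧
        r = (star (prodVec x y) ⬝ᵥ bellA.mulVec (prodVec x y)).re} (-(1 / 2)) ∧
    IsGreatest {r : ℝ | ∃ x y : Fin 2 → ℂ, isUnitVec x ∧ isUnitVec y ∧
        r = (star (prodVec x y) ⬝ᵥ bellA.mulVec (prodVec x y)).re} (1 / 2) := by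
  have hs2 : Real.sqrt 2 * Real.sqrt 2 = 2 := Real.mul_self_sqrt (by norm_num)
  have hs2' : ((Real.sqrt 2)⁻¹ : ℝ) ^ 2 = 1 / 2 := by
    rw [sq, ← mul_inv, hs2]; norm_num
  have hs2pos : (0:ℝ) < Real.sqrt 2 := Real.sqrt_pos.mpr (by norm_num)
  set c : ℂ := (((Real.sqrt 2)⁻¹ : ℝ) : ℂ) with hc
  have hunit : isUnitVec (fun _ : Fin 2 => c) := by
    simp [isUnitVec, Fin.sum_univ_two, hc, Complex.norm_real, abs_of_pos (inv_pos.mpr hs2pos)]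
  have hunit' : isUnitVec (![c, -c]) := by
    simp [isUnitVec, Fin.sum_univ_two, hc, Complex.norm_real, abs_of_pos (inv_pos.mpr hs2pos)]
    norm_num
  have hcc : (starRingEnd ℂ (c * c) * (c * c)).re = 1 / 4 := by
    have : c * c = ((1/2 : ℝ) : ℂ) := by
      rw [hc, ← Complex.ofReal_mul, ← sq, hs2']
    rw [this]
    simp [Complex.conj_ofReal, ← Complex.ofReal_mul]
    norm_num
  constructor
  · constructor
    · exact ⟨![c, -c], fun _ => c, hunit', hunit, by
        rw [bellA_re]
        simp only [Matrix.cons_val_zero, Matrix.cons_val_one, Matrix.head_cons]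
        have : starRingEnd ℂ (c * c) * (-c * c) = -(starRingEnd ℂ (c * c) * (c * c)) := by ring
        rw [this, Complex.neg_re, hcc]; norm_num⟩
    · rintro r ⟨x, y, hx, hy, rfl⟩
      have := bellA_bound x y hx hy
      rw [abs_le] at this; linarith [this.1]
  · constructor
    · exact ⟨fun _ => c, fun _ => c, hunit, hunit, by
        rw [bellA_re, hcc]; norm_num⟩
    · rintro r ⟨x, y, hx, hy, rfl⟩
      have := bellA_bound x y hx hy
      rw [abs_le] at this; linarith [this.2]

end
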